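/- Let R be a route in B_0 whose initial arrow has source the vertex 1, and let (a_1,…,a_l) be the colors of its arrows from the initial arrow to the terminal one. Then Σ_{j=1}^{l−1} C_{a_j a_l} = δ_{a_l,1} − 1. -/

import Mathlib

/-- The arrows (source, color, target) of the crystal graph of the
Kirillov–Reshetikhin crystal `B^{1,1}` of type `E6^(1)`. -/
def arrows : List (ℕ × ℕ × ℕ) :=
  [(1,1,2),(2,2,3),(3,3,4),(4,4,5),(4,6,7),(5,5,6),(5,6,8),(6,6,9),(7,4,8),(8,5,9),
   (8,3,10),(9,3,11),(10,5,11),(10,2,13),(11,4,12),(11,2,14),(12,2,15),(13,5,14),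
   (13,1,18),(14,4,15),(14,1,19),(15,3,16),(15,1,20),(16,6,17),(16,1,21),(17,1,22),
   (18,5,19),(19,4,20),(20,3,21),(21,6,22),(21,2,23),(22,2,24),(23,6,24),(24,3,25),
   (25,4,26),(26,5,27),(17,0,1),(22,0,2),(24,0,3),(25,0,4),(26,0,5),(27,0,6)]

/-- Adjacency in the `E6` Dynkin diagram. -/
def adjPairs : List (ℕ × ℕ) :=
  [(1,2),(2,1),(2,3),(3,2),(3,4),(4,3),(4,5),(5,4),(3,6),(6,3)]

def Adj (a b : ℕ) : Prop := (a, b) ∈ adjPairs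

instance (a b : ℕ) : Decidable (Adj a b) := by unfold Adj; infer_instance

/-- The Cartan matrix of `E6`. -/
def Cmat (a b : ℕ) : ℤ := if a = b then 2 else if Adj a b then -1 else 0

/-- A route in `B_0`: a list of consecutive arrows of nonzero color. -/
def IsRoute (R : List (ℕ × ℕ × ℕ)) : Prop :=
  (∀ β ∈ R, β ∈ arrows ∧ β.2.1 ≠ 0) ∧ R.Chain' (fun β β' => β.2.2 = β'.1)

/-- Lemma 2.2(2): for a route starting at vertex `1` with colors `(a_1, …, a_l)`,
`Σ_{j=1}^{l-1} C_{a_j a_l} = δ_{a_l,1} − 1`. -/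
def gTab : List (List ℤ) :=
  [[0,0,0,0,0,0],
   [2,-1,0,0,0,0],
   [1,1,-1,0,0,0],
   [1,0,1,-1,0,-1],
   [1,0,0,1,-1,-1],
   [1,0,0,0,1,-1],
   [1,0,0,-1,0,1],
   [1,0,-1,1,-1,1],
   [1,0,-1,0,1,1],
   [1,-1,1,0,-1,0],
   [1,-1,1,-1,1,0],
   [1,-1,0,1,0,0],
   [0,1,0,0,-1,0],
   [0,1,0,-1,1,0],
   [0,1,-1,1,0,0],
   [0,0,1,0,0,-1],
   [0,0,0,0,0,1],
   [2,0,0,0,-1,0],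
   [2,0,0,-1,1,0],
   [2,0,-1,1,0,0],
   [2,-1,1,0,0,-1],
   [2,-1,0,0,0,1],
   [1,1,0,0,0,-1],
   [1,1,-1,0,0,1],
   [1,0,1,-1,0,0],
   [1,0,0,1,-1,0],
   [1,0,0,0,1,0]]


def g (b c : ℕ) : ℤ := ((gTab.getD (b-1) []).getD (c-1) 0)

lemma keyA : ∀ β ∈ arrows, β.2.1 ≠ 0 → ∀ γ ∈ arrows, γ.2.1 ≠ 0 →
    g β.2.2 γ.2.1 = g β.1 γ.2.1 + Cmat β.2.1 γ.2.1 := by decide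

lemma keyB : ∀ γ ∈ arrows, γ.2.1 ≠ 0 →
    g γ.1 γ.2.1 = (if γ.2.1 = 1 then (1 : ℤ) else 0) - 1 := by decide

lemma aux (γ : ℕ × ℕ × ℕ) (hγ : γ ∈ arrows) (hγ0 : γ.2.1 ≠ 0) :
    ∀ (R : List (ℕ × ℕ × ℕ)) (s : ℕ),
      (∀ β ∈ R ++ [γ], β ∈ arrows ∧ β.2.1 ≠ 0) →
      (R ++ [γ]).Chain' (fun β β' => β.2.2 = β'.1) →
      ((R ++ [γ]).head (by simp)).1 = s →
      (R.map (fun β => Cmat β.2.1 γ.2.1)).sum = g γ.1 γ.2.1 - g s γ.2.1 := by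
  intro R
  induction R with
  | nil =>
    intro s _ _ hs
    simp only [List.nil_append, List.head_cons] at hs
    simp [hs]
  | cons β R' ih =>
    intro s hmem hch hs
    simp only [List.cons_append, List.head_cons] at hs
    have hβ := hmem β (by simp)
    rw [List.cons_append, List.Chain', List.isChain_cons] at hch
    have hhead : ((R' ++ [γ]).head (by simp)).1 = β.2.2 := by
      have := hch.1 ((R' ++ [γ]).head (by simp)) (List.head?_eq_head _)
      exact this.symm
    have hrec := ih β.2.2 (fun x hx => hmem x (by simp [hx])) hch.2 hhead
    have hA := keyA β hβ.1 hβ.2 γ hγ hγ0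
    simp only [List.map_cons, List.sum_cons, hrec]
    subst hs
    omega

lemma g_one (c : ℕ) : g 1 c = 0 := by
  show ([(0:ℤ),0,0,0,0,0].getD (c-1) 0) = 0
  rcases c - 1 with _|_|_|_|_|_|n <;> simp [List.getD]

theorem stmt1 (R : List (ℕ × ℕ × ℕ)) (hR : IsRoute R) (hne : R ≠ [])
    (hstart : (R.head hne).1 = 1) :
    ((R.dropLast).map (fun β => Cmat β.2.1 (R.getLast hne).2.1)).sum
      = (if (R.getLast hne).2.1 = 1 then (1 : ℤ) else 0) - 1 := by
  obtain ⟨hmem, hch⟩ := hR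
  set γ := R.getLast hne with hγdef
  have hγ : γ ∈ arrows ∧ γ.2.1 ≠ 0 := hmem γ (List.getLast_mem hne)
  have hsplit : R = R.dropLast ++ [γ] := (List.dropLast_append_getLast hne).symm
  have h := aux γ hγ.1 hγ.2 R.dropLast 1 (by rw [← hsplit]; exact hmem)
      (by rw [← hsplit]; exact hch)
      (by
        have : ((R.dropLast ++ [γ]).head (by simp)) = R.head hne := by
          congr 1
          exact hsplit.symm
        rw [this]; exact hstart)
  rw [h, keyB γ hγ.1 hγ.2]
  have : g 1 γ.2.1 = 0 := g_one _
  rw [this]; ring
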